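/- For every n ≥ 2 and every 1 ≤ j ≤ n−1, the identity ∂c_n/∂t_j = ∂c_n/∂t₀ − ∂c_j/∂t₀ holds identically as functions of (t₀, …, t_n), where c_j (which depends only on t₀, …, t_j) is regarded as a function of (t₀, …, t_n). -/

import Mathlib

/-- `κₘ = ρ + m - 1`. -/
noncomputable def kappa (ρ : ℝ) (m : ℕ) : ℝ := ρ + m - 1

/-- `[κ₁]! = 1`, `[κᵣ]! = κ₂κ₃⋯κᵣ` for `r ≥ 2` (and `[κ₀]! = 1` by convention). -/
noncomputable def kfact (ρ : ℝ) : ℕ → ℝ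
  | 0 => 1
  | 1 => 1
  | (r + 2) => kfact ρ (r + 1) * kappa ρ (r + 2)

/-- `τₘ = t₀ + t₁ + ⋯ + tₘ`. -/
noncomputable def tau (t : ℕ → ℝ) (m : ℕ) : ℝ := ∑ i ∈ Finset.range (m + 1), t i

/-- The `s`-fold iterate of the integration operator `(∂ₜ⁻¹ f)(x) = ∫₀ˣ f`. -/
noncomputable def iInt : ℕ → (ℝ → ℝ) → ℝ → ℝ
  | 0, f => f
  | (s + 1), f => fun x => ∫ y in (0:ℝ)..x, iInt s f y

/-- Partial derivative `∂f/∂tⱼ` of a vector-valued function of the variables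
`t = (t₀, t₁, t₂, …)`. -/
noncomputable def pdG {𝔤 : Type*} [NormedAddCommGroup 𝔤] [NormedSpace ℝ 𝔤]
    (j : ℕ) (f : (ℕ → ℝ) → 𝔤) (t : ℕ → ℝ) : 𝔤 :=
  deriv (fun s => f (Function.update t j s)) (t j)

/-- Iterated partial derivative `∂ᵏ/∂t₀ᵏ`. -/
noncomputable def pd0iter : ℕ → ((ℕ → ℝ) → ℝ) → (ℕ → ℝ) → ℝ
  | 0, f => f
  | (k + 1), f => pdG 0 (pd0iter k f)

/-- The function `cₙ(t₀, …, tₙ)` of the paper: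
`cₙ = Σ_{m=2}^{n-1} Σ_{r=2}^{m} Σ_{s=1}^{r-1} ((-1)^{r-1}[κᵣ]!/(r-s-1)!) τ_{m-1}^{r-s-1}
((∂ₜₘ⁻¹)ˢ a_{m,r})(tₘ) + Σ_{r=1}^{n} ((-1)^r [κᵣ]!/(r-1)!) τ_{n-1}^{r-1} a_{n,r}(tₙ)`. -/
noncomputable def cfun (ρ : ℝ) (a : ℕ → ℕ → ℝ → ℝ) (n : ℕ) (t : ℕ → ℝ) : ℝ :=
  (∑ m ∈ Finset.Icc 2 (n - 1), ∑ r ∈ Finset.Icc 2 m, ∑ s ∈ Finset.Icc 1 (r - 1),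
      ((-1 : ℝ) ^ (r - 1) * kfact ρ r / ((r - s - 1).factorial : ℝ))
        * tau t (m - 1) ^ (r - s - 1) * iInt s (a m r) (t m))
    + ∑ r ∈ Finset.Icc 1 n,
        ((-1 : ℝ) ^ r * kfact ρ r / ((r - 1).factorial : ℝ))
          * tau t (n - 1) ^ (r - 1) * a n r (t n)

lemma iInt_cont {f : ℝ → ℝ} (hf : Continuous f) : ∀ s, Continuous (iInt s f)
  | 0 => hf
  | (s + 1) => by
    have h := iInt_cont hf s
    show Continuous fun x => ∫ y in (0:ℝ)..x, iInt s f y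
    exact intervalIntegral.continuous_primitive (fun a b => h.intervalIntegrable a b) 0

lemma hasDerivAt_iInt {f : ℝ → ℝ} (hf : Continuous f) (s : ℕ) (x : ℝ) :
    HasDerivAt (iInt (s + 1) f) (iInt s f x) x := by
  have h := iInt_cont hf s
  exact intervalIntegral.integral_hasDerivAt_right (h.intervalIntegrable _ _)
    (h.stronglyMeasurableAtFilter _ _) h.continuousAt

lemma tau_update (t : ℕ → ℝ) (j : ℕ) (x : ℝ) (m : ℕ) :
    tau (Function.update t j x) m = if j ≤ m then tau t m + (x - t j) else tau t m := by
  have h1 : ∀ i, Function.update t j x i = t i + (if i = j then x - t j else 0) := by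
    intro i
    by_cases hij : i = j
    · subst hij; simp
    · simp [Function.update_of_ne hij, hij]
  unfold tau
  simp only [h1, Finset.sum_add_distrib, Finset.sum_ite_eq' (Finset.range (m+1)) j,
    Finset.mem_range]
  by_cases h : j ≤ m
  · rw [if_pos (by omega), if_pos h]
  · rw [if_neg (by omega), if_neg h, add_zero]

/-- derivative of a single triple-sum term w.r.t. `t j` -/
noncomputable def dterm (ρ : ℝ) (a : ℕ → ℕ → ℝ → ℝ) (j : ℕ) (t : ℕ → ℝ)
    (m r s : ℕ) : ℝ :=
  if m = j then
    ((-1 : ℝ) ^ (r - 1) * kfact ρ r / ((r - s - 1).factorial : ℝ))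
      * tau t (m - 1) ^ (r - s - 1) * iInt (s - 1) (a m r) (t m)
  else if j ≤ m - 1 then
    ((-1 : ℝ) ^ (r - 1) * kfact ρ r / ((r - s - 1).factorial : ℝ))
      * ((r - s - 1 : ℕ) : ℝ) * tau t (m - 1) ^ (r - s - 1 - 1) * iInt s (a m r) (t m)
  else 0

/-- derivative of a single second-sum term w.r.t. `t j` for `j ≤ n-1` -/
noncomputable def sterm (ρ : ℝ) (a : ℕ → ℕ → ℝ → ℝ) (n : ℕ) (t : ℕ → ℝ) (r : ℕ) : ℝ :=
  ((-1 : ℝ) ^ r * kfact ρ r / ((r - 1).factorial : ℝ))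
    * ((r - 1 : ℕ) : ℝ) * tau t (n - 1) ^ (r - 1 - 1) * a n r (t n)

noncomputable def Dfun (ρ : ℝ) (a : ℕ → ℕ → ℝ → ℝ) (n j : ℕ) (t : ℕ → ℝ) : ℝ :=
  (∑ m ∈ Finset.Icc 2 (n - 1), ∑ r ∈ Finset.Icc 2 m, ∑ s ∈ Finset.Icc 1 (r - 1),
      dterm ρ a j t m r s)
    + ∑ r ∈ Finset.Icc 1 n, sterm ρ a n t r

lemma hasDerivAt_term (ρ : ℝ) (a : ℕ → ℕ → ℝ → ℝ) (ha : ∀ m r, Continuous (a m r))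
    (j : ℕ) (t : ℕ → ℝ) (m r s : ℕ) (hm : 2 ≤ m) (hs : 1 ≤ s) :
    HasDerivAt (fun x => ((-1 : ℝ) ^ (r - 1) * kfact ρ r / ((r - s - 1).factorial : ℝ))
        * tau (Function.update t j x) (m - 1) ^ (r - s - 1)
        * iInt s (a m r) (Function.update t j x m))
      (dterm ρ a j t m r s) (t j) := by
  set C : ℝ := (-1 : ℝ) ^ (r - 1) * kfact ρ r / ((r - s - 1).factorial : ℝ) with hC
  by_cases hmj : m = j
  · -- j = m ≥ 2, so ¬ j ≤ m - 1
    subst hmj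
    have hfe : (fun x => C * tau (Function.update t m x) (m - 1) ^ (r - s - 1)
        * iInt s (a m r) (Function.update t m x m)) =
        (fun x => (C * tau t (m - 1) ^ (r - s - 1)) * iInt s (a m r) x) := by
      funext x
      rw [tau_update, if_neg (by omega), Function.update_self, mul_assoc]
    rw [hfe, dterm, if_pos rfl]
    obtain ⟨s0, rfl⟩ : ∃ s0, s = s0 + 1 := ⟨s - 1, by omega⟩
    have h := (hasDerivAt_iInt (ha m r) s0 (t m)).const_mul
      (C * tau t (m - 1) ^ (r - (s0 + 1) - 1))
    simpa [mul_assoc, hC] using h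
  · by_cases hjm : j ≤ m - 1
    · have hfe : (fun x => C * tau (Function.update t j x) (m - 1) ^ (r - s - 1)
          * iInt s (a m r) (Function.update t j x m)) =
          (fun x => (C * iInt s (a m r) (t m))
            * (tau t (m - 1) + (x - t j)) ^ (r - s - 1)) := by
        funext x
        rw [tau_update, if_pos hjm, Function.update_of_ne (by omega)]
        ring
      rw [hfe, dterm, if_neg hmj, if_pos hjm]
      have h1 : HasDerivAt (fun x => tau t (m - 1) + (x - t j)) 1 (t j) := by
        simpa using ((hasDerivAt_id (t j)).sub_const (t j)).const_add (tau t (m - 1))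
      have h2 := (h1.pow (r - s - 1)).const_mul (C * iInt s (a m r) (t m))
      have : tau t (m - 1) + (t j - t j) = tau t (m - 1) := by ring
      rw [this] at h2
      refine h2.congr_deriv ?_
      rw [hC]
      ring
    · have hfe : (fun x => C * tau (Function.update t j x) (m - 1) ^ (r - s - 1)
          * iInt s (a m r) (Function.update t j x m)) =
          (fun _ => C * tau t (m - 1) ^ (r - s - 1) * iInt s (a m r) (t m)) := by
        funext x
        rw [tau_update, if_neg hjm, Function.update_of_ne (by omega)]
      rw [hfe, dterm, if_neg hmj, if_neg hjm]
      exact hasDerivAt_const _ _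

lemma hasDerivAt_sterm (ρ : ℝ) (a : ℕ → ℕ → ℝ → ℝ)
    (n j : ℕ) (t : ℕ → ℝ) (r : ℕ) (hn : 1 ≤ n) (hj : j ≤ n - 1) :
    HasDerivAt (fun x => ((-1 : ℝ) ^ r * kfact ρ r / ((r - 1).factorial : ℝ))
        * tau (Function.update t j x) (n - 1) ^ (r - 1)
        * a n r (Function.update t j x n))
      (sterm ρ a n t r) (t j) := by
  set C : ℝ := (-1 : ℝ) ^ r * kfact ρ r / ((r - 1).factorial : ℝ) with hC
  have hfe : (fun x => C * tau (Function.update t j x) (n - 1) ^ (r - 1)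
      * a n r (Function.update t j x n)) =
      (fun x => (C * a n r (t n)) * (tau t (n - 1) + (x - t j)) ^ (r - 1)) := by
    funext x
    rw [tau_update, if_pos hj, Function.update_of_ne (by omega)]
    ring
  rw [hfe]
  have h1 : HasDerivAt (fun x => tau t (n - 1) + (x - t j)) 1 (t j) := by
    simpa using ((hasDerivAt_id (t j)).sub_const (t j)).const_add (tau t (n - 1))
  have h2 := (h1.pow (r - 1)).const_mul (C * a n r (t n))
  have : tau t (n - 1) + (t j - t j) = tau t (n - 1) := by ring
  rw [this] at h2
  refine h2.congr_deriv ?_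
  simp only [sterm, hC]
  ring

lemma hasDerivAt_cfun_update (ρ : ℝ) (a : ℕ → ℕ → ℝ → ℝ) (ha : ∀ m r, Continuous (a m r))
    (n j : ℕ) (t : ℕ → ℝ) (hn : 1 ≤ n) (hj : j ≤ n - 1) :
    HasDerivAt (fun x => cfun ρ a n (Function.update t j x)) (Dfun ρ a n j t) (t j) := by
  unfold cfun Dfun
  apply HasDerivAt.add
  · apply HasDerivAt.fun_sum
    intro m hm
    apply HasDerivAt.fun_sum
    intro r hr
    apply HasDerivAt.fun_sum
    intro s hs
    exact hasDerivAt_term ρ a ha j t m r s (Finset.mem_Icc.mp hm).1 (Finset.mem_Icc.mp hs).1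
  · apply HasDerivAt.fun_sum
    intro r hr
    exact hasDerivAt_sterm ρ a n j t r hn hj

lemma pdG_cfun (ρ : ℝ) (a : ℕ → ℕ → ℝ → ℝ) (ha : ∀ m r, Continuous (a m r))
    (n j : ℕ) (t : ℕ → ℝ) (hn : 1 ≤ n) (hj : j ≤ n - 1) :
    pdG j (cfun ρ a n) t = Dfun ρ a n j t :=
  (hasDerivAt_cfun_update ρ a ha n j t hn hj).deriv

lemma dterm_gt (ρ : ℝ) (a : ℕ → ℕ → ℝ → ℝ) (j : ℕ) (t : ℕ → ℝ) (m r s : ℕ)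
    (hm : 2 ≤ m) (h : j < m) : dterm ρ a j t m r s = dterm ρ a 0 t m r s := by
  unfold dterm
  rw [if_neg (by omega), if_pos (by omega), if_neg (by omega), if_pos (by omega)]

lemma dterm_lt (ρ : ℝ) (a : ℕ → ℕ → ℝ → ℝ) (j : ℕ) (t : ℕ → ℝ) (m r s : ℕ)
    (h : m < j) : dterm ρ a j t m r s = 0 := by
  unfold dterm
  rw [if_neg (by omega), if_neg (by omega)]

lemma sterm_one (ρ : ℝ) (a : ℕ → ℕ → ℝ → ℝ) (n : ℕ) (t : ℕ → ℝ) :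
    sterm ρ a n t 1 = 0 := by
  simp [sterm]

lemma tele (ρ : ℝ) (a : ℕ → ℕ → ℝ → ℝ) (j : ℕ) (t : ℕ → ℝ) (r : ℕ)
    (hr : 2 ≤ r) (hj : 2 ≤ j) :
    (∑ s ∈ Finset.Icc 1 (r - 1), (dterm ρ a j t j r s - dterm ρ a 0 t j r s))
      + sterm ρ a j t r = 0 := by
  set f : ℕ → ℝ := fun s => if s ≤ r - 1 then
      ((-1 : ℝ) ^ (r - 1) * kfact ρ r / ((r - s - 1).factorial : ℝ))
        * tau t (j - 1) ^ (r - s - 1) * iInt (s - 1) (a j r) (t j) else 0 with hf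
  have hstep : ∀ s ∈ Finset.Icc 1 (r - 1),
      dterm ρ a j t j r s - dterm ρ a 0 t j r s = f s - f (s + 1) := by
    intro s hs
    obtain ⟨hs1, hs2⟩ := Finset.mem_Icc.mp hs
    have hd1 : dterm ρ a j t j r s = f s := by
      rw [hf]; simp only
      rw [dterm, if_pos rfl, if_pos hs2]
    rw [hd1]
    congr 1
    rw [dterm, if_neg (by omega), if_pos (by omega), hf]
    simp only
    by_cases hc : s + 1 ≤ r - 1
    · rw [if_pos hc]
      have e1 : r - (s + 1) - 1 = r - s - 1 - 1 := by omega
      have e2 : (s + 1) - 1 = s := rfl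
      have e3 : r - s - 1 = (r - s - 1 - 1) + 1 := by omega
      rw [e1, e2, e3, Nat.factorial_succ]
      have h0 : ((r - s - 1 - 1).factorial : ℝ) ≠ 0 := by
        exact_mod_cast Nat.factorial_ne_zero _
      push_cast
      field_simp
    · rw [if_neg hc]
      have : r - s - 1 = 0 := by omega
      rw [this]
      norm_num
  rw [Finset.sum_congr rfl hstep]
  have htel : ∑ s ∈ Finset.Icc 1 (r - 1), (f s - f (s + 1)) = f 1 - f r := by
    rw [← Finset.Ico_add_one_right_eq_Icc, Finset.sum_Ico_eq_sum_range]
    have e4 : r - 1 + 1 - 1 = r - 1 := by omega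
    rw [e4]
    have e5 : ∀ i, f (1 + i) - f (1 + i + 1) = f (1 + i) - f (1 + (i + 1)) := by
      intro i; rw [Nat.add_assoc]
    simp only [e5]
    rw [Finset.sum_range_sub' (fun i => f (1 + i)) (r - 1)]
    congr 2
    omega
  rw [htel]
  obtain ⟨q, rfl⟩ : ∃ q, r = q + 2 := ⟨r - 2, by omega⟩
  have hfr : f (q + 2) = 0 := by rw [hf]; simp only; rw [if_neg (by omega)]
  have hf1 : f 1 = ((-1 : ℝ) ^ (q + 1) * kfact ρ (q + 2) / (q.factorial : ℝ))
      * tau t (j - 1) ^ q * a j (q + 2) (t j) := by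
    rw [hf]; simp only
    rw [if_pos (by omega : 1 ≤ q + 2 - 1)]
    have e1 : q + 2 - 1 = q + 1 := by omega
    have e2 : q + 1 - 1 = q := by omega
    have e3 : (1:ℕ) - 1 = 0 := by omega
    rw [e1, e2, e3]
    rfl
  rw [hfr, hf1, sterm]
  have e6 : q + 2 - 1 = q + 1 := by omega
  have e7 : q + 1 - 1 = q := by omega
  rw [e6, e7, Nat.factorial_succ]
  have h0 : (q.factorial : ℝ) ≠ 0 := by exact_mod_cast Nat.factorial_ne_zero _
  push_cast
  field_simp
  ring

lemma keyj (ρ : ℝ) (a : ℕ → ℕ → ℝ → ℝ) (j : ℕ) (t : ℕ → ℝ) (hj : 2 ≤ j) :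
    (∑ r ∈ Finset.Icc 2 j, ∑ s ∈ Finset.Icc 1 (r - 1), dterm ρ a j t j r s)
      - (∑ r ∈ Finset.Icc 2 j, ∑ s ∈ Finset.Icc 1 (r - 1), dterm ρ a 0 t j r s)
      + ∑ r ∈ Finset.Icc 1 j, sterm ρ a j t r = 0 := by
  have hins : Finset.Icc 1 j = insert 1 (Finset.Icc 2 j) := by
    ext k; simp [Finset.mem_Icc, Finset.mem_insert]; omega
  have hS : ∑ r ∈ Finset.Icc 1 j, sterm ρ a j t r
      = ∑ r ∈ Finset.Icc 2 j, sterm ρ a j t r := by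
    rw [hins, Finset.sum_insert (by simp), sterm_one, zero_add]
  rw [hS, ← Finset.sum_sub_distrib, ← Finset.sum_add_distrib]
  apply Finset.sum_eq_zero
  intro r hr
  have h := tele ρ a j t r (Finset.mem_Icc.mp hr).1 hj
  rw [Finset.sum_sub_distrib] at h
  exact h

lemma Dfun_identity (ρ : ℝ) (a : ℕ → ℕ → ℝ → ℝ) (t : ℕ → ℝ) (n j : ℕ)
    (hn : 2 ≤ n) (hj1 : 1 ≤ j) (hjn : j ≤ n - 1) :
    Dfun ρ a n j t = Dfun ρ a n 0 t - Dfun ρ a j 0 t := by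
  unfold Dfun
  by_cases hj2 : j = 1
  · subst hj2
    have h1 : Finset.Icc 2 (1 - 1) = (∅ : Finset ℕ) := by decide
    have h2 : ∑ r ∈ Finset.Icc 1 1, sterm ρ a 1 t r = 0 := by
      simp [Finset.Icc_self, sterm_one]
    have h3 : (∑ m ∈ Finset.Icc 2 (n - 1), ∑ r ∈ Finset.Icc 2 m,
          ∑ s ∈ Finset.Icc 1 (r - 1), dterm ρ a 1 t m r s)
        = ∑ m ∈ Finset.Icc 2 (n - 1), ∑ r ∈ Finset.Icc 2 m,
          ∑ s ∈ Finset.Icc 1 (r - 1), dterm ρ a 0 t m r s := by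
      apply Finset.sum_congr rfl; intro m hm
      apply Finset.sum_congr rfl; intro r _
      apply Finset.sum_congr rfl; intro s _
      exact dterm_gt ρ a 1 t m r s (Finset.mem_Icc.mp hm).1
        (by have := (Finset.mem_Icc.mp hm).1; omega)
    rw [h1, h2, h3]
    simp
  · have hj : 2 ≤ j := by omega
    have hIoc : ∀ x : ℕ, Finset.Icc 2 x = Finset.Ioc 1 x := by
      intro x; ext k; simp [Finset.mem_Icc, Finset.mem_Ioc]; omega
    -- abbreviations
    set F : ℕ → ℝ := fun m => ∑ r ∈ Finset.Icc 2 m,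
        ∑ s ∈ Finset.Icc 1 (r - 1), dterm ρ a j t m r s with hF
    set G : ℕ → ℝ := fun m => ∑ r ∈ Finset.Icc 2 m,
        ∑ s ∈ Finset.Icc 1 (r - 1), dterm ρ a 0 t m r s with hG
    have split : ∀ H : ℕ → ℝ, ∑ m ∈ Finset.Ioc 1 (n - 1), H m
        = (∑ m ∈ Finset.Ioc 1 (j - 1), H m) + H j + ∑ m ∈ Finset.Ioc j (n - 1), H m := by
      intro H
      rw [← Finset.sum_Ioc_consecutive H (by omega : 1 ≤ j) (by omega : j ≤ n - 1)]
      congr 1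
      obtain ⟨p, rfl⟩ : ∃ p, j = p + 1 := ⟨j - 1, by omega⟩
      simp only [Nat.add_sub_cancel]
      exact Finset.sum_Ioc_succ_top (by omega) H
    have hzeroF : ∑ m ∈ Finset.Ioc 1 (j - 1), F m = 0 := by
      apply Finset.sum_eq_zero
      intro m hm
      obtain ⟨hm1, hm2⟩ := Finset.mem_Ioc.mp hm
      rw [hF]; simp only
      apply Finset.sum_eq_zero; intro r _
      apply Finset.sum_eq_zero; intro s _
      exact dterm_lt ρ a j t m r s (by omega)
    have hFG : ∑ m ∈ Finset.Ioc j (n - 1), F m = ∑ m ∈ Finset.Ioc j (n - 1), G m := by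
      apply Finset.sum_congr rfl
      intro m hm
      obtain ⟨hm1, hm2⟩ := Finset.mem_Ioc.mp hm
      rw [hF, hG]; simp only
      apply Finset.sum_congr rfl; intro r _
      apply Finset.sum_congr rfl; intro s _
      exact dterm_gt ρ a j t m r s (by omega) hm1
    have hkey : F j - G j + ∑ r ∈ Finset.Icc 1 j, sterm ρ a j t r = 0 :=
      keyj ρ a j t hj
    rw [hIoc (n - 1), hIoc (j - 1)]
    have e1 := split F
    have e2 := split G
    rw [e1, e2]
    linarith [hzeroF, hFG, hkey]

/-- For `n ≥ 2` and `1 ≤ j ≤ n-1`, the identity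
`∂cₙ/∂tⱼ = ∂cₙ/∂t₀ - ∂cⱼ/∂t₀` holds identically. -/
theorem stmt7 (ρ : ℝ) (a : ℕ → ℕ → ℝ → ℝ) (ha : ∀ m r, Continuous (a m r))
    (n j : ℕ) (hn : 2 ≤ n) (hj1 : 1 ≤ j) (hjn : j ≤ n - 1) (t : ℕ → ℝ) :
    pdG j (cfun ρ a n) t = pdG 0 (cfun ρ a n) t - pdG 0 (cfun ρ a j) t := by
  rw [pdG_cfun ρ a ha n j t (by omega) hjn,
    pdG_cfun ρ a ha n 0 t (by omega) (by omega),
    pdG_cfun ρ a ha j 0 t (by omega) (by omega)]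
  exact Dfun_identity ρ a t n j hn hj1 hjn
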